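/- In Exel's inverse monoid S(G), every element s satisfies s = (ss⁻¹)[η(s)], where η : S(G) → G is the monoid homomorphism sending e[g] to g. Consequently ss⁻¹ ≤ e_{η(s)} in the natural partial order of idempotents. -/
import Mathlib



/-- A concrete model of Exel's inverse monoid `S(G)`: pairs `(E, g)` where `E` is a
finite subset of `G` containing `1` and `g`, with product `(E,g)(F,h) = (E ∪ gF, gh)`. -/
@[ext]
structure ExelS (G : Type*) [Group G] [DecidableEq G] where
  carrier : Finset G
  elt : G
  one_mem : (1 : G) ∈ carrier
  elt_mem : elt ∈ carrier

namespace ExelS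

variable {G : Type*} [Group G] [DecidableEq G]

instance : Mul (ExelS G) :=
  ⟨fun s t =>
    ⟨s.carrier ∪ t.carrier.image (s.elt * ·), s.elt * t.elt,
      Finset.mem_union_left _ s.one_mem,
      Finset.mem_union_right _ (Finset.mem_image_of_mem _ t.elt_mem)⟩⟩

instance : One (ExelS G) :=
  ⟨⟨{1}, 1, Finset.mem_singleton_self 1, Finset.mem_singleton_self 1⟩⟩

/-- The inverse in the inverse monoid `S(G)`. -/
instance : Inv (ExelS G) :=
  ⟨fun s =>
    ⟨s.carrier.image (s.elt⁻¹ * ·), s.elt⁻¹,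
      Finset.mem_image.2 ⟨s.elt, s.elt_mem, by simp⟩,
      Finset.mem_image.2 ⟨1, s.one_mem, by simp⟩⟩⟩

@[simp] lemma mul_carrier (s t : ExelS G) :
    (s * t).carrier = s.carrier ∪ t.carrier.image (s.elt * ·) := rfl

@[simp] lemma mul_elt (s t : ExelS G) : (s * t).elt = s.elt * t.elt := rfl

@[simp] lemma one_carrier : (1 : ExelS G).carrier = {1} := rfl

@[simp] lemma one_elt : (1 : ExelS G).elt = 1 := rfl

@[simp] lemma inv_carrier (s : ExelS G) :
    s⁻¹.carrier = s.carrier.image (s.elt⁻¹ * ·) := rfl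

@[simp] lemma inv_elt (s : ExelS G) : s⁻¹.elt = s.elt⁻¹ := rfl

instance : Monoid (ExelS G) where
  mul_assoc a b c := by
    ext x
    · simp only [mul_carrier, Finset.image_union, Finset.image_image, Finset.union_assoc,
        Finset.mem_union, Finset.mem_image, Function.comp]
      constructor <;> rintro (h | h | ⟨y, hy, rfl⟩) <;> simp_all [mul_assoc]
    · simp [mul_assoc]
  one_mul s := by
    ext x
    · simp only [mul_carrier, one_carrier, one_elt, one_mul, Finset.image_id']
      constructor
      · intro h
        rcases Finset.mem_union.1 h with h | h
        · exact (Finset.mem_singleton.1 h) ▸ s.one_mem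
        · exact h
      · exact fun h => Finset.mem_union_right _ h
    · simp
  mul_one s := by
    ext x
    · simp only [mul_carrier, one_carrier, Finset.image_singleton, mul_one]
      constructor
      · intro h
        rcases Finset.mem_union.1 h with h | h
        · exact h
        · exact (Finset.mem_singleton.1 h) ▸ s.elt_mem
      · exact fun h => Finset.mem_union_left _ h
    · simp

/-- The canonical generators `[g]` of Exel's monoid. -/
def br (g : G) : ExelS G := ⟨{1, g}, g, by simp, by simp⟩

/-- The idempotents `e_g = [g][g⁻¹]`. -/
def eIdem (g : G) : ExelS G := br g * (br g⁻¹ : ExelS G)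

end ExelS

namespace ExelS

variable {G : Type*} [Group G] [DecidableEq G]

/-- The monoid homomorphism `η : S(G) → G` sending `e[g]` to `g`. -/
def eta : ExelS G →* G where
  toFun s := s.elt
  map_one' := rfl
  map_mul' _ _ := rfl

end ExelS

open ExelS in
/-- Every `s ∈ S(G)` satisfies `s = (ss⁻¹)[η(s)]`; consequently `ss⁻¹ ≤ e_{η(s)}`
in the natural partial order on idempotents (`e ≤ f` iff `ef = e`). -/
theorem exelS_eq_mul_inv_mul_br {G : Type*} [Group G] [DecidableEq G] (s : ExelS G) :
    s = s * s⁻¹ * br (eta s) ∧ (s * s⁻¹) * eIdem (eta s) = s * s⁻¹ := by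
  have hcar : (s * s⁻¹).carrier = s.carrier := by
    ext x
    simp only [mul_carrier, inv_carrier, Finset.image_image, Function.comp,
      Finset.mem_union, Finset.mem_image]
    constructor
    · rintro (h | ⟨y, hy, rfl⟩)
      · exact h
      · simpa using hy
    · exact fun h => Or.inl h
  have h1 : (1 : G) ∈ s.carrier := s.one_mem
  have h2 : s.elt ∈ s.carrier := s.elt_mem
  constructor
  · ext x
    · simp only [mul_carrier, hcar, mul_elt, inv_elt, mul_inv_cancel, br, eta,
        MonoidHom.coe_mk, OneHom.coe_mk, Finset.mem_union, Finset.mem_image]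
      constructor
      · exact fun h => Or.inl h
      · rintro (h | ⟨y, hy, rfl⟩)
        · exact h
        · rcases Finset.mem_insert.1 hy with rfl | hy
          · simpa using h1
          · simp only [Finset.mem_singleton] at hy
            subst hy; simpa using h2
    · simp [br, eta]
  · ext x
    · simp only [mul_carrier, hcar, mul_elt, inv_elt, mul_inv_cancel, eIdem, br, eta,
        MonoidHom.coe_mk, OneHom.coe_mk, Finset.mem_union, Finset.mem_image,
        Finset.image_union, Finset.image_image, Function.comp]
      constructor
      · rintro (h | h)
        · exact h
        · rcases h with (⟨y, hy, rfl⟩ | ⟨y, hy, rfl⟩) <;>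
          · rcases Finset.mem_insert.1 hy with rfl | hy
            · first
              | simpa using h1
              | simpa using h2
            · simp only [Finset.mem_singleton] at hy
              subst hy
              first
              | simpa using h1
              | simpa using h2
      · exact fun h => Or.inl h
    · simp [eIdem, br, eta]
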